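/- Path-formula invariance under cycle-bisimulation: let K_1 and K_2 be Kripke structures, B a cycle-bisimulation between them, and π_1, π_2 paths of K_1 and K_2 respectively that are bisimilar w.r.t. B (i.e., ((π_1)_i, (π_2)_i) ∈ B for all i ∈ ℕ). Then for every Cycle-CTL* path formula ψ and every position i ∈ ℕ, K_1, π_1, i ⊨ ψ if and only if K_2, π_2, i ⊨ ψ. -/
import Mathlib


namespace CycleCTL

universe u v

/-- A Kripke structure over a set `AP` of atomic propositions. -/
structure Kripke (AP : Type) : Type (u + 1) where
  World : Type u
  init : World
  R : World → World → Prop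
  label : World → Set AP
  serial : ∀ w, ∃ v, R w v

variable {AP : Type}

/-- An (infinite) path of a Kripke structure. -/
def IsPath (K : Kripke.{u} AP) (π : ℕ → K.World) : Prop :=
  ∀ i, K.R (π i) (π (i + 1))

/-- A cycle: a path visiting its first world infinitely often. -/
def IsCycle (K : Kripke.{u} AP) (π : ℕ → K.World) : Prop :=
  IsPath K π ∧ ∀ i, ∃ j, i < j ∧ π j = π 0

mutual
  /-- State formulas of Cycle-CTL*. -/
  inductive StateForm (AP : Type) : Type where
    | atom : AP → StateForm AP
    | not  : StateForm AP → StateForm AP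
    | and  : StateForm AP → StateForm AP → StateForm AP
    | or   : StateForm AP → StateForm AP → StateForm AP
    | E    : PathForm AP → StateForm AP
    | A    : PathForm AP → StateForm AP
    | Ec   : PathForm AP → StateForm AP
    | Ac   : PathForm AP → StateForm AP
  /-- Path formulas of Cycle-CTL*. -/
  inductive PathForm (AP : Type) : Type where
    | state : StateForm AP → PathForm AP
    | not   : PathForm AP → PathForm AP
    | and   : PathForm AP → PathForm AP → PathForm AP
    | or    : PathForm AP → PathForm AP → PathForm AP
    | next  : PathForm AP → PathForm AP
    | untl  : PathForm AP → PathForm AP → PathForm AP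
end

mutual
  /-- Satisfaction of a state formula at a world. -/
  def SatS (K : Kripke.{u} AP) : K.World → StateForm AP → Prop
    | w, .atom p => p ∈ K.label w
    | w, .not φ => ¬ SatS K w φ
    | w, .and φ₁ φ₂ => SatS K w φ₁ ∧ SatS K w φ₂
    | w, .or φ₁ φ₂ => SatS K w φ₁ ∨ SatS K w φ₂
    | w, .E ψ => ∃ π, IsPath K π ∧ π 0 = w ∧ SatP K π 0 ψ
    | w, .A ψ => ∀ π, IsPath K π → π 0 = w → SatP K π 0 ψ
    | w, .Ec ψ => ∃ π, IsCycle K π ∧ π 0 = w ∧ SatP K π 0 ψ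
    | w, .Ac ψ => ∀ π, IsCycle K π → π 0 = w → SatP K π 0 ψ
  /-- Satisfaction of a path formula on a path at a position. -/
  def SatP (K : Kripke.{u} AP) : (ℕ → K.World) → ℕ → PathForm AP → Prop
    | π, i, .state φ => SatS K (π i) φ
    | π, i, .not ψ => ¬ SatP K π i ψ
    | π, i, .and ψ₁ ψ₂ => SatP K π i ψ₁ ∧ SatP K π i ψ₂
    | π, i, .or ψ₁ ψ₂ => SatP K π i ψ₁ ∨ SatP K π i ψ₂
    | π, i, .next ψ => SatP K π (i + 1) ψ
    | π, i, .untl ψ₁ ψ₂ => ∃ k, SatP K π (i + k) ψ₂ ∧ ∀ j < k, SatP K π (i + j) ψ₁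
end

/-- `K ⊨ φ` : satisfaction at the initial world. -/
def Sat (K : Kripke.{u} AP) (φ : StateForm AP) : Prop := SatS K K.init φ

/-- `⊤` as a path formula, abbreviating `p ∨ ¬p`. -/
def topP (p : AP) : PathForm AP := .or (.state (.atom p)) (.not (.state (.atom p)))

/-- `F ψ` abbreviates `⊤ U ψ`. -/
def FP (p : AP) (ψ : PathForm AP) : PathForm AP := .untl (topP p) ψ

/-- `G ψ` abbreviates `¬(⊤ U ¬ψ)`. -/
def GP (p : AP) (ψ : PathForm AP) : PathForm AP := .not (FP p (.not ψ))


/-- A cycle-bisimulation between two Kripke structures. -/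
def IsCycleBisim (K₁ : Kripke.{u} AP) (K₂ : Kripke.{v} AP)
    (B : K₁.World → K₂.World → Prop) : Prop :=
  B K₁.init K₂.init ∧
  ∀ w₁ w₂, B w₁ w₂ →
    (K₁.label w₁ = K₂.label w₂) ∧
    (∀ v₁, K₁.R w₁ v₁ → ∃ v₂, K₂.R w₂ v₂ ∧ B v₁ v₂) ∧
    (∀ v₂, K₂.R w₂ v₂ → ∃ v₁, K₁.R w₁ v₁ ∧ B v₁ v₂) ∧
    (∀ π₁, IsCycle K₁ π₁ → π₁ 0 = w₁ →
      ∃ π₂, IsCycle K₂ π₂ ∧ π₂ 0 = w₂ ∧ ∀ i, B (π₁ i) (π₂ i)) ∧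
    (∀ π₂, IsCycle K₂ π₂ → π₂ 0 = w₂ →
      ∃ π₁, IsCycle K₁ π₁ ∧ π₁ 0 = w₁ ∧ ∀ i, B (π₁ i) (π₂ i))

section Aux

variable {K₁ : Kripke.{u} AP} {K₂ : Kripke.{v} AP} {B : K₁.World → K₂.World → Prop}

theorem liftPathFwd (hB : IsCycleBisim K₁ K₂ B) (π₁ : ℕ → K₁.World)
    (hπ : IsPath K₁ π₁) (w₂ : K₂.World) (hb : B (π₁ 0) w₂) :
    ∃ π₂, IsPath K₂ π₂ ∧ π₂ 0 = w₂ ∧ ∀ i, B (π₁ i) (π₂ i) := by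
  have step : ∀ n (v : K₂.World), B (π₁ n) v → ∃ v', K₂.R v v' ∧ B (π₁ (n+1)) v' := by
    intro n v hv
    obtain ⟨_, fwd, _, _, _⟩ := hB.2 _ _ hv
    exact fwd _ (hπ n)
  choose F hF1 hF2 using step
  let g : ∀ n, {v : K₂.World // B (π₁ n) v} := fun n =>
    Nat.rec ⟨w₂, hb⟩ (fun n p => ⟨F n p.1 p.2, hF2 n p.1 p.2⟩) n
  exact ⟨fun n => (g n).1, fun n => hF1 n (g n).1 (g n).2, rfl, fun n => (g n).2⟩

theorem liftPathBwd (hB : IsCycleBisim K₁ K₂ B) (π₂ : ℕ → K₂.World)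
    (hπ : IsPath K₂ π₂) (w₁ : K₁.World) (hb : B w₁ (π₂ 0)) :
    ∃ π₁, IsPath K₁ π₁ ∧ π₁ 0 = w₁ ∧ ∀ i, B (π₁ i) (π₂ i) := by
  have step : ∀ n (v : K₁.World), B v (π₂ n) → ∃ v', K₁.R v v' ∧ B v' (π₂ (n+1)) := by
    intro n v hv
    obtain ⟨_, _, bwd, _, _⟩ := hB.2 _ _ hv
    exact bwd _ (hπ n)
  choose F hF1 hF2 using step
  let g : ∀ n, {v : K₁.World // B v (π₂ n)} := fun n =>
    Nat.rec ⟨w₁, hb⟩ (fun n p => ⟨F n p.1 p.2, hF2 n p.1 p.2⟩) n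
  exact ⟨fun n => (g n).1, fun n => hF1 n (g n).1 (g n).2, rfl, fun n => (g n).2⟩

mutual
theorem satS_iff (hB : IsCycleBisim K₁ K₂ B) (φ : StateForm AP) :
    ∀ w₁ w₂, B w₁ w₂ → (SatS K₁ w₁ φ ↔ SatS K₂ w₂ φ)
  | w₁, w₂, hb => by
    cases φ with
    | atom p =>
      have := (hB.2 _ _ hb).1
      simp [SatS, this]
    | not φ => simp only [SatS]; exact not_congr (satS_iff hB φ w₁ w₂ hb)
    | and φ₁ φ₂ =>
      simp only [SatS]
      exact and_congr (satS_iff hB φ₁ w₁ w₂ hb) (satS_iff hB φ₂ w₁ w₂ hb)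
    | or φ₁ φ₂ =>
      simp only [SatS]
      exact or_congr (satS_iff hB φ₁ w₁ w₂ hb) (satS_iff hB φ₂ w₁ w₂ hb)
    | E ψ =>
      simp only [SatS]
      constructor
      · rintro ⟨π₁, hp, h0, hs⟩
        obtain ⟨π₂, hp₂, h0₂, hbi⟩ := liftPathFwd hB π₁ hp w₂ (h0 ▸ hb)
        exact ⟨π₂, hp₂, h0₂, (satP_iff hB ψ π₁ π₂ hbi 0).mp hs⟩
      · rintro ⟨π₂, hp, h0, hs⟩
        obtain ⟨π₁, hp₁, h0₁, hbi⟩ := liftPathBwd hB π₂ hp w₁ (h0 ▸ hb)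
        exact ⟨π₁, hp₁, h0₁, (satP_iff hB ψ π₁ π₂ hbi 0).mpr hs⟩
    | A ψ =>
      simp only [SatS]
      constructor
      · intro h π₂ hp h0
        obtain ⟨π₁, hp₁, h0₁, hbi⟩ := liftPathBwd hB π₂ hp w₁ (h0 ▸ hb)
        exact (satP_iff hB ψ π₁ π₂ hbi 0).mp (h π₁ hp₁ h0₁)
      · intro h π₁ hp h0
        obtain ⟨π₂, hp₂, h0₂, hbi⟩ := liftPathFwd hB π₁ hp w₂ (h0 ▸ hb)
        exact (satP_iff hB ψ π₁ π₂ hbi 0).mpr (h π₂ hp₂ h0₂)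
    | Ec ψ =>
      simp only [SatS]
      constructor
      · rintro ⟨π₁, hc, h0, hs⟩
        obtain ⟨π₂, hc₂, h0₂, hbi⟩ := (hB.2 _ _ hb).2.2.2.1 π₁ hc h0
        exact ⟨π₂, hc₂, h0₂, (satP_iff hB ψ π₁ π₂ hbi 0).mp hs⟩
      · rintro ⟨π₂, hc, h0, hs⟩
        obtain ⟨π₁, hc₁, h0₁, hbi⟩ := (hB.2 _ _ hb).2.2.2.2 π₂ hc h0
        exact ⟨π₁, hc₁, h0₁, (satP_iff hB ψ π₁ π₂ hbi 0).mpr hs⟩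
    | Ac ψ =>
      simp only [SatS]
      constructor
      · intro h π₂ hc h0
        obtain ⟨π₁, hc₁, h0₁, hbi⟩ := (hB.2 _ _ hb).2.2.2.2 π₂ hc h0
        exact (satP_iff hB ψ π₁ π₂ hbi 0).mp (h π₁ hc₁ h0₁)
      · intro h π₁ hc h0
        obtain ⟨π₂, hc₂, h0₂, hbi⟩ := (hB.2 _ _ hb).2.2.2.1 π₁ hc h0
        exact (satP_iff hB ψ π₁ π₂ hbi 0).mpr (h π₂ hc₂ h0₂)

theorem satP_iff (hB : IsCycleBisim K₁ K₂ B) (ψ : PathForm AP) :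
    ∀ (π₁ : ℕ → K₁.World) (π₂ : ℕ → K₂.World),
      (∀ i, B (π₁ i) (π₂ i)) → ∀ i, SatP K₁ π₁ i ψ ↔ SatP K₂ π₂ i ψ
  | π₁, π₂, hbi, i => by
    cases ψ with
    | state φ => simpa only [SatP] using satS_iff hB φ (π₁ i) (π₂ i) (hbi i)
    | not ψ => simp only [SatP]; exact not_congr (satP_iff hB ψ π₁ π₂ hbi i)
    | and ψ₁ ψ₂ =>
      simp only [SatP]
      exact and_congr (satP_iff hB ψ₁ π₁ π₂ hbi i) (satP_iff hB ψ₂ π₁ π₂ hbi i)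
    | or ψ₁ ψ₂ =>
      simp only [SatP]
      exact or_congr (satP_iff hB ψ₁ π₁ π₂ hbi i) (satP_iff hB ψ₂ π₁ π₂ hbi i)
    | next ψ => simp only [SatP]; exact satP_iff hB ψ π₁ π₂ hbi (i + 1)
    | untl ψ₁ ψ₂ =>
      simp only [SatP]
      exact exists_congr fun k =>
        and_congr (satP_iff hB ψ₂ π₁ π₂ hbi (i + k))
          (forall_congr' fun j => imp_congr Iff.rfl (satP_iff hB ψ₁ π₁ π₂ hbi (i + j)))
end

end Aux

/-- path-formula invariance under cycle-bisimulation: bisimilar paths satisfy the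
same path formulas at every position. -/
theorem stmt7 {AP : Type} (K₁ : Kripke.{u} AP) (K₂ : Kripke.{v} AP)
    (B : K₁.World → K₂.World → Prop) (hB : IsCycleBisim K₁ K₂ B)
    (π₁ : ℕ → K₁.World) (π₂ : ℕ → K₂.World)
    (h₁ : IsPath K₁ π₁) (h₂ : IsPath K₂ π₂) (hbis : ∀ i, B (π₁ i) (π₂ i)) :
    ∀ (ψ : PathForm AP) (i : ℕ), SatP K₁ π₁ i ψ ↔ SatP K₂ π₂ i ψ := by
  intro ψ i
  exact satP_iff hB ψ π₁ π₂ hbis i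

end CycleCTL
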